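/- If the origin does not lie in the convex hull of χ, then there exist a point x_l ∈ χ and a point x in the DPCIR of x_l such that ‖x‖ < ‖x_l‖. (Converse direction of the norm-monotonicity lemma.) -/

import Mathlib

open scoped RealInnerProductSpace

abbrev Pt := EuclideanSpace ℝ (Fin 2)

theorem dpcir_norm_decrease_exists (χ : Finset Pt) (hχ : χ.Nonempty)
    (h0 : (0 : Pt) ∉ convexHull ℝ (χ : Set Pt)) :
    ∃ xl ∈ χ, ∃ x : Pt,
      (∀ xj ∈ χ, xj ≠ xl → ⟪xl - xj, x - xl⟫ ≥ 0) ∧ ‖x‖ < ‖xl‖ := by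
  -- The convex hull is compact and nonempty
  set K : Set Pt := convexHull ℝ (χ : Set Pt) with hK
  have hKconv : Convex ℝ K := convex_convexHull ℝ _
  have hKcpt : IsCompact K := (χ.finite_toSet).isCompact_convexHull (𝕜 := ℝ)
  have hKne : K.Nonempty := hχ.imp fun v hv => subset_convexHull ℝ _ hv
  -- Nearest point p to 0 in K
  obtain ⟨p, hpK, hpmin⟩ := hKcpt.exists_isMinOn hKne (continuous_norm.continuousOn)
  have hp0 : p ≠ 0 := fun h => h0 (h ▸ hpK)
  have hpnorm : (0:ℝ) < ‖p‖ ^ 2 := pow_pos (norm_pos_iff.2 hp0) 2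
  -- Projection characterization: ⟪p, w⟫ ≥ ‖p‖² for all w ∈ K
  have hinf : ‖(0:Pt) - p‖ = ⨅ w : K, ‖(0:Pt) - w‖ := by
    haveI : Nonempty K := hKne.to_subtype
    apply le_antisymm
    · apply le_ciInf
      intro w
      simpa using hpmin w.2
    · exact ciInf_le ⟨0, fun _ ⟨_, h⟩ => h ▸ norm_nonneg _⟩ (⟨p, hpK⟩ : K)
  have hproj : ∀ w ∈ K, ⟪(0:Pt) - p, w - p⟫ ≤ 0 :=
    (norm_eq_iInf_iff_real_inner_le_zero hKconv hpK).1 hinf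
  have hproj' : ∀ w ∈ K, ‖p‖ ^ 2 ≤ ⟪w, p⟫ := by
    intro w hw
    have := hproj w hw
    rw [zero_sub, inner_neg_left, inner_sub_right] at this
    have h2 : ⟪p, p⟫ ≤ ⟪p, w⟫ := by linarith
    calc ‖p‖ ^ 2 = ⟪p, p⟫ := (real_inner_self_eq_norm_sq p).symm
      _ ≤ ⟪p, w⟫ := h2
      _ = ⟪w, p⟫ := real_inner_comm w p
  -- Choose xl minimizing ⟪·, p⟫ over χ
  obtain ⟨xl, hxl, hxlmin⟩ := χ.exists_min_image (fun v => ⟪v, p⟫) hχ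
  have hxlK : (xl : Pt) ∈ K := subset_convexHull ℝ _ hxl
  have hxlp : ‖p‖ ^ 2 ≤ ⟪xl, p⟫ := hproj' xl hxlK
  have hxlp0 : (0:ℝ) < ⟪xl, p⟫ := lt_of_lt_of_le hpnorm hxlp
  set t : ℝ := ⟪xl, p⟫ / ‖p‖ ^ 2 with ht
  have ht0 : 0 < t := div_pos hxlp0 hpnorm
  refine ⟨xl, hxl, xl - t • p, ?_, ?_⟩
  · intro xj hxj _
    have : xl - t • p - xl = -(t • p) := by abel
    rw [this, inner_neg_right, inner_smul_right, inner_sub_left]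
    have := hxlmin xj hxj
    nlinarith
  · have hn : ‖xl - t • p‖ ^ 2 = ‖xl‖ ^ 2 - ⟪xl, p⟫ ^ 2 / ‖p‖ ^ 2 := by
      rw [norm_sub_sq_real, inner_smul_right, norm_smul, ht]
      rw [Real.norm_eq_abs, abs_of_pos (div_pos hxlp0 hpnorm)]
      field_simp
      ring
    have hlt : ‖xl - t • p‖ ^ 2 < ‖xl‖ ^ 2 := by
      rw [hn]
      have : 0 < ⟪xl, p⟫ ^ 2 / ‖p‖ ^ 2 := div_pos (by positivity) hpnorm
      linarith
    exact lt_of_pow_lt_pow_left₀ 2 (norm_nonneg _) hlt
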